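/- Let λ > 0, φ > 0, λ_T > 0, and T ∈ ℝ. For t ≤ T define A(t) := −√(λφ) · ( λ_T + 2√(λφ) tanh(√(φ/λ)(T−t)) ) / ( 2√(λφ) + λ_T tanh(√(φ/λ)(T−t)) ). Then the denominator is strictly positive for all t ≤ T, A(T) = −λ_T/2, and A is differentiable on (−∞, T] with A'(t) = φ − A(t)²/λ for all t ≤ T. -/

import Mathlib

lemma hasDerivAt_tanh' (x : ℝ) :
    HasDerivAt Real.tanh (1 - Real.tanh x ^ 2) x := by
  have hc := Real.cosh_pos x
  have h : HasDerivAt (fun y => Real.sinh y / Real.cosh y)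
      ((Real.cosh x * Real.cosh x - Real.sinh x * Real.sinh x) / Real.cosh x ^ 2) x :=
    (Real.hasDerivAt_sinh x).div (Real.hasDerivAt_cosh x) hc.ne'
  have heq : (fun y => Real.sinh y / Real.cosh y) = Real.tanh := by
    funext y; rw [Real.tanh_eq_sinh_div_cosh]
  rw [heq] at h
  convert h using 1
  rw [Real.tanh_eq_sinh_div_cosh]
  have := Real.cosh_sq_sub_sinh_sq x
  field_simp

/-- Explicit solution of the scalar Riccati terminal value problem
`A' = φ − A²/λ`, `A(T) = −λ_T/2` (case `μ = 0`): the denominator is positive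
for `t ≤ T`, the terminal condition holds, and the ODE holds on `(−∞, T]`. -/
theorem stmt_14 (lam phi lamT T : ℝ) (hlam : 0 < lam) (hphi : 0 < phi)
    (hlamT : 0 < lamT)
    (A : ℝ → ℝ)
    (hA : ∀ t ≤ T, A t = -Real.sqrt (lam * phi)
      * (lamT + 2 * Real.sqrt (lam * phi) * Real.tanh (Real.sqrt (phi / lam) * (T - t)))
      / (2 * Real.sqrt (lam * phi) + lamT * Real.tanh (Real.sqrt (phi / lam) * (T - t)))) :
    (∀ t ≤ T, 0 < 2 * Real.sqrt (lam * phi)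
        + lamT * Real.tanh (Real.sqrt (phi / lam) * (T - t))) ∧
    A T = -lamT / 2 ∧
    (∀ t ≤ T, HasDerivWithinAt A (phi - (A t) ^ 2 / lam) (Set.Iic T) t) := by
  set s := Real.sqrt (lam * phi) with hs_def
  set k := Real.sqrt (phi / lam) with hk_def
  have hs : 0 < s := Real.sqrt_pos.mpr (by positivity)
  have hs2 : s ^ 2 = lam * phi := Real.sq_sqrt (by positivity)
  have hk : 0 < k := Real.sqrt_pos.mpr (by positivity)
  have hk2 : k ^ 2 = phi / lam := Real.sq_sqrt (by positivity)
  have hks : lam * k = s := by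
    have h1 : (lam * k) ^ 2 = s ^ 2 := by
      rw [hs2, mul_pow, hk2]; field_simp
    have h2 : (lam * k - s) * (lam * k + s) = 0 := by linear_combination h1
    have h3 : 0 < lam * k + s := by positivity
    rcases mul_eq_zero.mp h2 with h | h
    · linarith
    · linarith
  have hk_eq : k = s / lam := by rw [← hks]; field_simp
  -- tanh nonneg for t ≤ T
  have htanh_nonneg : ∀ t ≤ T, 0 ≤ Real.tanh (k * (T - t)) := by
    intro t ht
    rw [Real.tanh_eq_sinh_div_cosh]
    exact div_nonneg (Real.sinh_nonneg_iff.mpr (mul_nonneg hk.le (sub_nonneg.mpr ht)))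
      (Real.cosh_pos _).le
  have hD : ∀ t ≤ T, 0 < 2 * s + lamT * Real.tanh (k * (T - t)) := by
    intro t ht
    have := htanh_nonneg t ht
    nlinarith
  refine ⟨hD, ?_, ?_⟩
  · have h := hA T le_rfl
    simp only [sub_self, mul_zero, Real.tanh_zero] at h
    rw [h]; field_simp; ring
  · intro t ht
    set g : ℝ → ℝ := fun u => Real.tanh (k * (T - u)) with hg_def
    have hg' : ∀ u, HasDerivAt g (-k * (1 - g u ^ 2)) u := by
      intro u
      have hu : HasDerivAt (fun u : ℝ => k * (T - u)) (k * (-1)) u :=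
        ((hasDerivAt_id u).const_sub T).const_mul k
      have := (hasDerivAt_tanh' (k * (T - u))).comp u hu
      refine this.congr_deriv ?_
      simp only [hg_def]; ring
    set F : ℝ → ℝ := fun u => -s * (lamT + 2 * s * g u) / (2 * s + lamT * g u)
      with hF_def
    have hDt : (2 * s + lamT * g t) ≠ 0 := (hD t ht).ne'
    have hnum : HasDerivAt (fun u => -s * (lamT + 2 * s * g u))
        (-s * (2 * s * (-k * (1 - g t ^ 2)))) t := by
      have := ((hg' t).const_mul (2 * s)).const_add lamT
      exact this.const_mul (-s)
    have hden : HasDerivAt (fun u => 2 * s + lamT * g u)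
        (lamT * (-k * (1 - g t ^ 2))) t :=
      ((hg' t).const_mul lamT).const_add (2 * s)
    have hF : HasDerivAt F
        ((-s * (2 * s * (-k * (1 - g t ^ 2))) * (2 * s + lamT * g t)
          - -s * (lamT + 2 * s * g t) * (lamT * (-k * (1 - g t ^ 2))))
          / (2 * s + lamT * g t) ^ 2) t := hnum.div hden hDt
    have hAF : Set.EqOn A F (Set.Iic T) := by
      intro u hu
      rw [hA u hu]
    have hval : (-s * (2 * s * (-k * (1 - g t ^ 2))) * (2 * s + lamT * g t)
          - -s * (lamT + 2 * s * g t) * (lamT * (-k * (1 - g t ^ 2))))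
          / (2 * s + lamT * g t) ^ 2 = phi - (A t) ^ 2 / lam := by
      rw [hA t ht]
      have hGt : Real.tanh (k * (T - t)) = g t := rfl
      rw [hGt]
      have hphi_eq : phi = s ^ 2 / lam := by rw [hs2]; field_simp
      rw [hphi_eq, hk_eq]
      have hDt' : s * 2 + g t * lamT ≠ 0 := by rw [mul_comm s, mul_comm (g t)]; exact hDt
      field_simp
      ring
    exact (hval ▸ hF.hasDerivWithinAt).congr hAF (hA t ht)
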